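/- Every tree (in fact, every forest with no isolated vertices) is proper conflict-free (degree + 1)-choosable: for any list assignment L with |L(v)| = d(v) + 1 for every vertex v, there exists a proper conflict-free L-coloring. -/

import Mathlib

open Finset SimpleGraph
open scoped Classical

section Core
variable {V : Type*} (G : SimpleGraph V)

/-- reachable within a finset -/
def RW (s : Finset V) (a b : V) : Prop := ∃ w : G.Walk a b, ∀ x ∈ w.support, x ∈ s

noncomputable def kids (s : Finset V) (r : V) : Finset V := s.filter (G.Adj r ·)

noncomputable def subt (s : Finset V) (r u : V) : Finset V :=
  (s.erase r).filter (fun v => RW G (s.erase r) u v)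

lemma subt_ssub {s : Finset V} {r : V} (h : r ∈ s) (u : V) : (subt G s r u).card < s.card :=
  lt_of_le_of_lt (Finset.card_le_card (Finset.filter_subset _ _)) (Finset.card_erase_lt_of_mem h)

variable (L : V → Finset ℕ)

noncomputable def gp : (s : Finset V) → V → ℕ → Finset ℕ := fun s r γ =>
  if _h : r ∈ s then
    ((L r).erase γ).filter (fun c =>
      (∀ u ∈ kids G s r, (gp (subt G s r u) u c).Nonempty) ∧
      ((∀ u ∈ kids G s r, gp (subt G s r u) u c ≠ {γ}) ∨
        (∃ x, x ≠ γ ∧ ∃ u ∈ kids G s r, x ∈ gp (subt G s r u) u c ∧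
          ∀ u' ∈ kids G s r, u' ≠ u → gp (subt G s r u') u' c ≠ {x})))
  else ∅
  termination_by s => s.card
  decreasing_by all_goals exact subt_ssub G (by assumption) _

/-- the success condition -/
def Succ (s : Finset V) (r : V) (c γ : ℕ) : Prop :=
  (∀ u ∈ kids G s r, (gp G L (subt G s r u) u c).Nonempty) ∧
  ((∀ u ∈ kids G s r, gp G L (subt G s r u) u c ≠ {γ}) ∨
    (∃ x, x ≠ γ ∧ ∃ u ∈ kids G s r, x ∈ gp G L (subt G s r u) u c ∧
      ∀ u' ∈ kids G s r, u' ≠ u → gp G L (subt G s r u') u' c ≠ {x}))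

lemma gp_eq {s : Finset V} {r : V} (h : r ∈ s) (γ : ℕ) :
    gp G L s r γ = ((L r).erase γ).filter (fun c => Succ G L s r c γ) := by
  rw [gp, dif_pos h]
  ext c
  exact Finset.mem_filter.trans (Finset.mem_filter (p := fun c => Succ G L s r c γ)).symm

structure Good (s : Finset V) (r : V) : Prop where
  mem : r ∈ s
  closed : ∀ v ∈ s, v ≠ r → ∀ w, G.Adj v w → w ∈ s
  reach : ∀ v ∈ s, RW G s r v

variable {G L}

lemma mem_kids {s : Finset V} {r u : V} : u ∈ kids G s r ↔ u ∈ s ∧ G.Adj r u := by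
  simp [kids]

lemma mem_subt {s : Finset V} {r u v : V} :
    v ∈ subt G s r u ↔ v ∈ s.erase r ∧ RW G (s.erase r) u v := by simp [subt]

lemma rw_refl {s : Finset V} {a : V} (ha : a ∈ s) : RW G s a a :=
  ⟨Walk.nil, by simp [ha]⟩

lemma subt_self {s : Finset V} {r u : V} (hu : u ∈ kids G s r) : u ∈ subt G s r u := by
  rw [mem_kids] at hu
  have : u ∈ s.erase r := Finset.mem_erase.2 ⟨hu.2.ne', hu.1⟩
  exact mem_subt.2 ⟨this, rw_refl this⟩

lemma mem_of_mem_subt {s : Finset V} {r u v : V} (h : v ∈ subt G s r u) : v ∈ s ∧ v ≠ r := by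
  rw [mem_subt, Finset.mem_erase] at h; exact ⟨h.1.2, h.1.1⟩

/-- key acyclicity lemma: a vertex in the branch of `u` other than `u` is not adjacent to `r`. -/
lemma no_adj_r (hforest : G.IsAcyclic) {s' : Finset V} {r u v : V}
    (hadj : G.Adj r u) (hr : r ∉ s') (hRW : RW G s' u v) (hne : v ≠ u) : ¬ G.Adj v r := by
  intro hvr
  obtain ⟨w, hw⟩ := hRW
  have hp : ∀ x ∈ w.toPath.1.support, x ∈ s' := fun x hx => hw x (Walk.support_toPath_subset w hx)
  have hrp : r ∉ w.toPath.1.support := fun h => hr (hp r h)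
  have h1 : (Walk.cons hadj w.toPath.1).IsPath := (w.toPath.2).cons hrp
  have h2 : (Walk.cons hvr.symm Walk.nil).IsPath := by
    simp [Walk.isPath_def, hvr.ne']
  have := hforest.path_unique ⟨Walk.cons hadj w.toPath.1, h1⟩ ⟨Walk.cons hvr.symm Walk.nil, h2⟩
  have hlen : (Walk.cons hadj w.toPath.1).length = (Walk.cons hvr.symm Walk.nil).length := by
    rw [Subtype.mk_eq_mk.1 this]
  simp only [Walk.length_cons, Walk.length_nil] at hlen
  have h0 : w.toPath.1.length = 0 := by omega
  exact hne (Walk.eq_of_length_eq_zero h0).symm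

/-- branches of distinct children are disjoint -/
lemma branch_disj (hforest : G.IsAcyclic) {s' : Finset V} {r u₁ u₂ v : V}
    (h1 : G.Adj r u₁) (h2 : G.Adj r u₂) (hne : u₁ ≠ u₂) (hr : r ∉ s')
    (hw1 : RW G s' u₁ v) (hw2 : RW G s' u₂ v) : False := by
  obtain ⟨w1, hsup1⟩ := hw1
  obtain ⟨w2, hsup2⟩ := hw2
  have hrp1 : r ∉ w1.toPath.1.support := fun h => hr (hsup1 r (Walk.support_toPath_subset w1 h))
  have hrp2 : r ∉ w2.toPath.1.support := fun h => hr (hsup2 r (Walk.support_toPath_subset w2 h))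
  have hP1 : (Walk.cons h1 w1.toPath.1).IsPath := (w1.toPath.2).cons hrp1
  have hP2 : (Walk.cons h2 w2.toPath.1).IsPath := (w2.toPath.2).cons hrp2
  have := hforest.path_unique ⟨_, hP1⟩ ⟨_, hP2⟩
  have hs : (Walk.cons h1 w1.toPath.1).support = (Walk.cons h2 w2.toPath.1).support := by
    rw [Subtype.mk_eq_mk.1 this]
  rw [Walk.support_cons, Walk.support_cons, w1.toPath.1.support_eq_cons,
    w2.toPath.1.support_eq_cons] at hs
  rw [List.cons_eq_cons] at hs
  rw [List.cons_eq_cons] at hs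
  exact hne hs.2.1

lemma kids_subt_eq {s : Finset V} {r u : V} (hG : Good G s r) (hu : u ∈ kids G s r) :
    kids G (subt G s r u) u = (kids G s u).erase r := by
  have hu' := mem_kids.1 hu
  have hune : u ≠ r := hu'.2.ne'
  ext x
  simp only [mem_kids, mem_subt, Finset.mem_erase]
  constructor
  · rintro ⟨⟨⟨hxr, hxs⟩, -⟩, hadj⟩
    exact ⟨hxr, hxs, hadj⟩
  · rintro ⟨hxr, hxs, hadj⟩
    refine ⟨⟨⟨hxr, hxs⟩, ⟨Walk.cons hadj Walk.nil, ?_⟩⟩, hadj⟩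
    intro y hy
    simp only [Walk.support_cons, Walk.support_nil, List.mem_cons, List.mem_singleton,
      List.not_mem_nil, or_false] at hy
    rcases hy with rfl | rfl
    · exact Finset.mem_erase.2 ⟨hune, hu'.1⟩
    · exact Finset.mem_erase.2 ⟨hxr, hxs⟩

lemma good_subt (hforest : G.IsAcyclic) {s : Finset V} {r u : V} (hG : Good G s r) (hu : u ∈ kids G s r) :
    Good G (subt G s r u) u := by
  have hu' := mem_kids.1 hu
  have hrnot : r ∉ s.erase r := Finset.notMem_erase r s
  refine ⟨subt_self hu, ?_, ?_⟩
  · intro v hv hne w hadj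
    obtain ⟨hvse, hRW⟩ := mem_subt.1 hv
    have hvs := (Finset.mem_erase.1 hvse).2
    have hvr := (Finset.mem_erase.1 hvse).1
    have hws : w ∈ s := hG.closed v hvs hvr w hadj
    have hwr : w ≠ r := by
      rintro rfl
      exact no_adj_r hforest hu'.2 hrnot hRW hne hadj
    refine mem_subt.2 ⟨Finset.mem_erase.2 ⟨hwr, hws⟩, ?_⟩
    obtain ⟨w1, hw1⟩ := hRW
    refine ⟨w1.concat hadj, fun x hx => ?_⟩
    rw [Walk.support_concat] at hx
    rcases (by simpa using hx : x ∈ w1.support ∨ x = w) with hx' | rfl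
    · exact hw1 x hx'
    · exact Finset.mem_erase.2 ⟨hwr, hws⟩
  · intro v hv
    obtain ⟨hvse, w1, hw1⟩ := mem_subt.1 hv
    refine ⟨w1, fun x hx => ?_⟩
    exact mem_subt.2 ⟨hw1 x hx,
      ⟨w1.takeUntil x hx, fun y hy => hw1 y (Walk.support_takeUntil_subset w1 hx hy)⟩⟩

lemma kids_subt_eq_deep (hforest : G.IsAcyclic) {s : Finset V} {r u v : V}
    (hG : Good G s r) (hu : u ∈ kids G s r) (hv : v ∈ subt G s r u) (hne : v ≠ u) :
    kids G (subt G s r u) v = kids G s v := by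
  ext x
  simp only [mem_kids]
  constructor
  · rintro ⟨hx, ha⟩; exact ⟨(mem_of_mem_subt hx).1, ha⟩
  · rintro ⟨hx, ha⟩; exact ⟨(good_subt hforest hG hu).closed v hv hne x ha, ha⟩

lemma subt_disjoint (hforest : G.IsAcyclic) {s : Finset V} {r u₁ u₂ : V}
    (h1 : u₁ ∈ kids G s r) (h2 : u₂ ∈ kids G s r) (hne : u₁ ≠ u₂) :
    Disjoint (subt G s r u₁) (subt G s r u₂) := by
  rw [Finset.disjoint_left]
  intro v hv1 hv2
  obtain ⟨-, hRW1⟩ := mem_subt.1 hv1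
  obtain ⟨-, hRW2⟩ := mem_subt.1 hv2
  exact branch_disj hforest (mem_kids.1 h1).2 (mem_kids.1 h2).2 hne
    (Finset.notMem_erase r s) hRW1 hRW2

lemma cover {s : Finset V} {r : V} (hG : Good G s r) {v : V} (hv : v ∈ s) (hne : v ≠ r) :
    ∃ u ∈ kids G s r, v ∈ subt G s r u := by
  obtain ⟨w, hw⟩ := hG.reach v hv
  have hps : ∀ x ∈ w.toPath.1.support, x ∈ s :=
    fun x hx => hw x (Walk.support_toPath_subset w hx)
  obtain ⟨u, hadj, q, hq⟩ := Walk.exists_eq_cons_of_ne (Ne.symm hne) w.toPath.1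
  have hpp := w.toPath.2
  rw [hq, Walk.cons_isPath_iff] at hpp
  have hqs : ∀ x ∈ q.support, x ∈ s := by
    intro x hx
    exact hps x (by rw [hq, Walk.support_cons]; exact List.mem_cons_of_mem _ hx)
  have hus : u ∈ s := hqs u q.start_mem_support
  refine ⟨u, mem_kids.2 ⟨hus, hadj⟩, mem_subt.2 ⟨Finset.mem_erase.2 ⟨hne, hv⟩, q, ?_⟩⟩
  intro x hx
  refine Finset.mem_erase.2 ⟨?_, hqs x hx⟩
  rintro rfl
  exact hpp.2 hx

end Core

noncomputable def wt (A : Finset ℕ) : ℕ := if A = ∅ then 2 else if A.card = 1 then 1 else 0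

lemma wt_le_two (A : Finset ℕ) : wt A ≤ 2 := by unfold wt; split_ifs <;> omega

lemma wt_empty : wt (∅ : Finset ℕ) = 2 := by simp [wt]

lemma wt_card_one {A : Finset ℕ} (h : A.card = 1) : wt A = 1 := by
  have h' : A ≠ ∅ := by intro h'; rw [h'] at h; simp at h
  simp [wt, h', h]

lemma one_le_wt_card {A : Finset ℕ} (h : 1 ≤ wt A) : A.card + wt A = 2 := by
  unfold wt at *
  split_ifs at * with h1 h2
  · simp [h1]
  · omega
  · omega

lemma wt_zero_of {A : Finset ℕ} (h : A.Nonempty) (h2 : wt A = 0) : 2 ≤ A.card := by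
  have hc : A.card ≠ 0 := fun h0 => h.ne_empty (Finset.card_eq_zero.1 h0)
  unfold wt at h2
  split_ifs at h2 <;> omega

section Inv
variable {V : Type*} {G : SimpleGraph V}

lemma mem_gp_iff {L : V → Finset ℕ} {s : Finset V} {r : V} (h : r ∈ s) {γ c : ℕ} :
    c ∈ gp G L s r γ ↔ c ∈ (L r).erase γ ∧ Succ G L s r c γ := by
  rw [gp_eq G L h γ, Finset.mem_filter]

lemma inv (hforest : G.IsAcyclic) (L : V → Finset ℕ) :
    ∀ (n : ℕ) (s : Finset V) (r : V), s.card = n → Good G s r →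
      (∀ v ∈ s, v ≠ r → (kids G s v).card + 1 = (L v).card) →
      ((kids G s r).card + 2 = (L r).card) →
      ∀ t : Finset ℕ, (t.sum fun γ => wt (gp G L s r γ)) ≤ 2 := by
  intro n
  induction n using Nat.strong_induction_on with
  | _ n IH =>
  intro s r hn hG hfmt hroot t
  classical
  -- child invariants
  have invc : ∀ u ∈ kids G s r, ∀ t' : Finset ℕ,
      (t'.sum fun γ => wt (gp G L (subt G s r u) u γ)) ≤ 2 := by
    intro u hu t'
    have hGu := good_subt hforest hG hu
    have hus : u ∈ s := (mem_kids.1 hu).1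
    have hur : u ≠ r := (mem_kids.1 hu).2.ne'
    refine IH (subt G s r u).card ?_ _ u rfl hGu ?_ ?_ t'
    · rw [← hn]; exact subt_ssub G hG.mem u
    · intro v hv hvu
      rw [kids_subt_eq_deep hforest hG hu hv hvu]
      exact hfmt v (mem_of_mem_subt hv).1 (mem_of_mem_subt hv).2
    · rw [kids_subt_eq hG hu]
      have hrk : r ∈ kids G s u := mem_kids.2 ⟨hG.mem, (mem_kids.1 hu).2.symm⟩
      rw [Finset.card_erase_of_mem hrk]
      have h1 := hfmt u hus hur
      have hpos : 1 ≤ (kids G s u).card := Finset.card_pos.2 ⟨r, hrk⟩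
      omega
  set K := kids G s r with hK
  set k := K.card with hk
  set Lr := L r with hLr
  have hcardLr : Lr.card = k + 2 := hroot.symm
  set cS : V → ℕ → Finset ℕ := fun u c => gp G L (subt G s r u) u c with hcS
  set cost : ℕ → ℕ := fun c => K.sum (fun u => wt (cS u c)) with hcost
  have hbudget : (Lr.sum cost) ≤ 2 * k := by
    calc Lr.sum cost = K.sum (fun u => Lr.sum (fun c => wt (cS u c))) := Finset.sum_comm
    _ ≤ K.sum (fun _ => 2) := Finset.sum_le_sum (fun u hu => invc u hu Lr)
    _ = 2 * k := by rw [Finset.sum_const, smul_eq_mul, mul_comm]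
  set dead : ℕ → Prop := fun c => ∃ u, u ∈ K ∧ cS u c = ∅ with hdead
  set Dset := Lr.filter dead with hDset
  set Cset := Lr.filter (fun c => ¬ dead c) with hCset
  have hCD : Dset.card + Cset.card = k + 2 := by
    rw [hDset, hCset, ← hcardLr]
    exact Finset.card_filter_add_card_filter_not _
  have hdeadcost : ∀ c ∈ Dset, 2 ≤ cost c := by
    intro c hc
    obtain ⟨u, hu, he⟩ := (Finset.mem_filter.1 hc).2
    calc (2:ℕ) = wt (cS u c) := by rw [he, wt_empty]
    _ ≤ cost c := by
        exact Finset.single_le_sum (f := fun x => wt (cS x c)) (fun i _ => Nat.zero_le _) hu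
  have hDbudget : 2 * Dset.card + Cset.sum cost ≤ 2 * k := by
    have h1 : 2 * Dset.card ≤ Dset.sum cost := by
      calc 2 * Dset.card = Dset.sum (fun _ => 2) := by
            rw [Finset.sum_const, smul_eq_mul, mul_comm]
      _ ≤ Dset.sum cost := Finset.sum_le_sum hdeadcost
    have h2 : Dset.sum cost + Cset.sum cost = Lr.sum cost :=
      Finset.sum_filter_add_sum_filter_not _ _ _
    omega
  -- injectivity of bad-witnesses
  have hinj : ∀ c1 ∈ Dset, ∀ c2 ∈ Dset, ∀ u ∈ K, cS u c1 = ∅ → cS u c2 = ∅ → c1 = c2 := by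
    intro c1 hc1 c2 hc2 u hu he1 he2
    by_contra hne
    have h := invc u hu {c1, c2}
    rw [Finset.sum_pair hne] at h
    rw [show gp G L (subt G s r u) u c1 = cS u c1 from rfl,
      show gp G L (subt G s r u) u c2 = cS u c2 from rfl, he1, he2, wt_empty] at h
    omega
  set wit : ℕ → V := fun c => if hc : ∃ u, u ∈ K ∧ cS u c = ∅ then hc.choose else r with hwit
  have hwit1 : ∀ c ∈ Dset, wit c ∈ K ∧ cS (wit c) c = ∅ := by
    intro c hc
    have h := (Finset.mem_filter.1 hc).2
    rw [hwit]; dsimp only; split_ifs with hc'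
    · exact hc'.choose_spec
    · exact absurd h hc'
  have hD_le_k : Dset.card ≤ k := by
    refine Finset.card_le_card_of_injOn wit (fun c hc => (hwit1 c hc).1) ?_
    intro c1 hc1 c2 hc2 heq
    exact hinj c1 hc1 c2 hc2 (wit c1) (hwit1 c1 hc1).1 (hwit1 c1 hc1).2
      (by rw [heq]; exact (hwit1 c2 hc2).2)
  -- live / conditions
  set lv : ℕ → Prop := fun c => ∀ u ∈ K, (cS u c).Nonempty with hlv
  have hlv_iff : ∀ c, lv c ↔ ¬ dead c := by
    intro c
    constructor
    · rintro h ⟨u, hu, he⟩; exact (h u hu).ne_empty he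
    · intro h u hu
      rcases Finset.eq_empty_or_nonempty (cS u c) with he | hne
      · exact absurd ⟨u, hu, he⟩ h
      · exact hne
  set SA : ℕ → ℕ → Prop := fun c γ => ∀ u ∈ K, cS u c ≠ {γ} with hSA
  set SB : ℕ → ℕ → Prop :=
    fun c x => ∃ u ∈ K, x ∈ cS u c ∧ ∀ u' ∈ K, u' ≠ u → cS u' c ≠ {x} with hSB
  have hmem_gp : ∀ γ c, c ∈ gp G L s r γ ↔
      (c ∈ Lr.erase γ ∧ lv c ∧ (SA c γ ∨ ∃ x, x ≠ γ ∧ SB c x)) := by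
    intro γ c
    rw [mem_gp_iff hG.mem]
    exact Iff.rfl
  set failp : ℕ → ℕ → Prop := fun c γ => ¬ (SA c γ ∨ ∃ x, x ≠ γ ∧ SB c x) with hfailp
  set F : ℕ → ℕ := fun γ => (Cset.filter (fun c => failp c γ)).card with hF
  -- key per-color inequality
  have hkey : ∀ γ, 1 ≤ wt (gp G L s r γ) →
      k + wt (gp G L s r γ) ≤ Dset.card + F γ + 1 := by
    intro γ hγ
    have hsub : Lr.erase γ ⊆ (gp G L s r γ ∪ Dset) ∪ (Cset.filter (fun c => failp c γ)) := by
      intro c hc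
      by_cases hd : dead c
      · exact Finset.mem_union_left _
          (Finset.mem_union_right _ (Finset.mem_filter.2 ⟨Finset.mem_of_mem_erase hc, hd⟩))
      · by_cases hsucc : SA c γ ∨ ∃ x, x ≠ γ ∧ SB c x
        · exact Finset.mem_union_left _ (Finset.mem_union_left _
            ((hmem_gp γ c).2 ⟨hc, (hlv_iff c).2 hd, hsucc⟩))
        · exact Finset.mem_union_right _ (Finset.mem_filter.2
            ⟨Finset.mem_filter.2 ⟨Finset.mem_of_mem_erase hc, hd⟩, hsucc⟩)
    have h1 : Lr.card - 1 ≤ (Lr.erase γ).card := Finset.pred_card_le_card_erase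
    have h2 := Finset.card_le_card hsub
    have h3 := Finset.card_union_le (gp G L s r γ ∪ Dset) (Cset.filter (fun c => failp c γ))
    have h4 := Finset.card_union_le (gp G L s r γ) Dset
    have h5 := one_le_wt_card hγ
    have h6 : (Cset.filter (fun c => failp c γ)).card = F γ := rfl
    omega
  -- double counting
  have hdcount : ∀ T : Finset ℕ,
      T.sum F = Cset.sum (fun c => (T.filter (fun γ => failp c γ)).card) := by
    intro T
    rw [hF]
    simp only [Finset.card_filter]
    exact Finset.sum_comm
  -- per-candidate bound
  have htc : ∀ c ∈ Cset, ∀ T : Finset ℕ, (T.filter (fun γ => failp c γ)).card ≤ cost c := by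
    intro c hc T
    set Tf := T.filter (fun γ => failp c γ) with hTf
    have hlive : lv c := (hlv_iff c).2 (Finset.mem_filter.1 hc).2
    rcases Nat.lt_or_ge Tf.card 2 with hlt | hge
    · rcases Nat.eq_zero_or_pos Tf.card with h0 | h1
      · omega
      · obtain ⟨γ, hγ⟩ := Finset.card_pos.1 h1
        have hfail : failp c γ := (Finset.mem_filter.1 hγ).2
        obtain ⟨u, hu, he⟩ : ∃ u ∈ K, cS u c = {γ} := by
          by_contra h
          push_neg at h
          exact hfail (Or.inl h)
        have h1le : 1 ≤ cost c := by
          calc (1:ℕ) = wt (cS u c) := by rw [he, wt_card_one (Finset.card_singleton γ)]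
          _ ≤ cost c := by
              exact Finset.single_le_sum (f := fun x => wt (cS x c)) (fun i _ => Nat.zero_le _) hu
        omega
    · -- at least two failing colors: every failing γ is doubly-witnessed
      obtain ⟨γa, hγa, γb, hγb, hab⟩ := Finset.one_lt_card.1 hge
      have hn2 : ∀ γ ∈ Tf, 2 ≤ (K.filter (fun u => cS u c = {γ})).card := by
        intro γ hγ
        by_contra hle
        push_neg at hle
        have hfail : failp c γ := (Finset.mem_filter.1 hγ).2
        obtain ⟨u0, hu0, he0⟩ : ∃ u ∈ K, cS u c = {γ} := by
          by_contra h
          push_neg at h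
          exact hfail (Or.inl h)
        have huniq : ∀ u' ∈ K, u' ≠ u0 → cS u' c ≠ {γ} := by
          intro u' hu' hne he'
          have h2 : 1 < (K.filter (fun u => cS u c = {γ})).card :=
            Finset.one_lt_card.2 ⟨u0, Finset.mem_filter.2 ⟨hu0, he0⟩, u',
              Finset.mem_filter.2 ⟨hu', he'⟩, fun h => hne h.symm⟩
          omega
        -- pick another failing color
        obtain ⟨γ'', hγ'', hne''⟩ : ∃ γ'' ∈ Tf, γ'' ≠ γ := by
          by_cases h : γa = γ
          · exact ⟨γb, hγb, fun hh => hab (h ▸ hh ▸ rfl)⟩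
          · exact ⟨γa, hγa, h⟩
        have hfail'' : failp c γ'' := (Finset.mem_filter.1 hγ'').2
        exact hfail'' (Or.inr ⟨γ, hne''.symm, u0, hu0,
          (by rw [he0]; exact Finset.mem_singleton_self γ), huniq⟩)
      -- sum up
      have hdisj : ∀ γ1 ∈ Tf, ∀ γ2 ∈ Tf, γ1 ≠ γ2 →
          Disjoint (K.filter (fun u => cS u c = {γ1})) (K.filter (fun u => cS u c = {γ2})) := by
        intro γ1 _ γ2 _ hne
        rw [Finset.disjoint_left]
        intro u h1 h2
        have e1 := (Finset.mem_filter.1 h1).2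
        have e2 := (Finset.mem_filter.1 h2).2
        rw [e1] at e2
        exact hne (Finset.singleton_injective e2)
      set B := Tf.biUnion (fun γ => K.filter (fun u => cS u c = {γ})) with hB
      have hcardB : B.card = Tf.sum (fun γ => (K.filter (fun u => cS u c = {γ})).card) :=
        Finset.card_biUnion hdisj
      have h2T : 2 * Tf.card ≤ B.card := by
        rw [hcardB]
        calc 2 * Tf.card = Tf.sum (fun _ => 2) := by
              rw [Finset.sum_const, smul_eq_mul, mul_comm]
        _ ≤ _ := Finset.sum_le_sum hn2
      have hBK : B.card ≤ cost c := by
        have hsub : B ⊆ K := by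
          intro u hu
          obtain ⟨γ, -, hu'⟩ := Finset.mem_biUnion.1 hu
          exact Finset.mem_of_mem_filter u hu'
        have hone : ∀ u ∈ B, 1 ≤ wt (cS u c) := by
          intro u hu
          obtain ⟨γ, -, hu'⟩ := Finset.mem_biUnion.1 hu
          rw [(Finset.mem_filter.1 hu').2, wt_card_one (Finset.card_singleton γ)]
        calc B.card = B.sum (fun _ => 1) := by rw [Finset.sum_const, smul_eq_mul, mul_one]
        _ ≤ B.sum (fun u => wt (cS u c)) := Finset.sum_le_sum hone
        _ ≤ K.sum (fun u => wt (cS u c)) :=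
            Finset.sum_le_sum_of_subset hsub
        _ = cost c := rfl
      omega
  -- main contradiction
  by_contra hcon
  push_neg at hcon
  have hW : 3 ≤ t.sum (fun γ => wt (gp G L s r γ)) := hcon
  by_cases hex : ∃ γ ∈ t, wt (gp G L s r γ) = 2
  · -- one bad spot plus another weak spot
    obtain ⟨γ1, ht1, hf1⟩ := hex
    have hsplit : wt (gp G L s r γ1) + (t.erase γ1).sum (fun γ => wt (gp G L s r γ))
        = t.sum (fun γ => wt (gp G L s r γ)) :=
      Finset.add_sum_erase t (fun γ => wt (gp G L s r γ)) ht1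
    have : (t.erase γ1).sum (fun γ => wt (gp G L s r γ)) ≠ 0 := by omega
    obtain ⟨γ2, ht2, hf2⟩ := Finset.exists_ne_zero_of_sum_ne_zero this
    have hne12 : γ2 ≠ γ1 := (Finset.mem_erase.1 ht2).1
    have hk1 := hkey γ1 (by omega)
    have hk2 := hkey γ2 (by omega)
    have hd2 : ({γ1, γ2} : Finset ℕ).sum F = F γ1 + F γ2 := Finset.sum_pair (fun h => hne12 h.symm)
    have hd3 := hdcount {γ1, γ2}
    have hd4 : Cset.sum (fun c => (({γ1, γ2} : Finset ℕ).filter (fun γ => failp c γ)).card)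
        ≤ Cset.sum cost := Finset.sum_le_sum (fun c hc => htc c hc _)
    omega
  · -- three weak spots
    push_neg at hex
    have hle1 : ∀ γ ∈ t, wt (gp G L s r γ) ≤ 1 := by
      intro γ hγ
      have := wt_le_two (gp G L s r γ)
      have := hex γ hγ
      omega
    set t' := t.filter (fun γ => wt (gp G L s r γ) ≠ 0) with ht'
    have hsum_t' : t'.sum (fun γ => wt (gp G L s r γ)) = t.sum (fun γ => wt (gp G L s r γ)) :=
      Finset.sum_filter_ne_zero t
    have hcard_t' : 3 ≤ t'.card := by
      have h1 : t'.sum (fun γ => wt (gp G L s r γ)) ≤ t'.sum (fun _ => 1) :=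
        Finset.sum_le_sum (fun γ hγ => hle1 γ (Finset.mem_of_mem_filter γ hγ))
      rw [Finset.sum_const, smul_eq_mul, mul_one] at h1
      omega
    obtain ⟨T3, hT3sub, hT3card⟩ := Finset.exists_subset_card_eq hcard_t'
    have hT3w : ∀ γ ∈ T3, 1 ≤ wt (gp G L s r γ) := by
      intro γ hγ
      have := (Finset.mem_filter.1 (hT3sub hγ)).2
      omega
    -- sum the key inequality over T3
    have hsumkey : T3.sum (fun _ => k + 1) ≤ T3.sum (fun γ => Dset.card + F γ + 1) := by
      refine Finset.sum_le_sum (fun γ hγ => ?_)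
      have := hkey γ (hT3w γ hγ)
      have := hT3w γ hγ
      omega
    rw [Finset.sum_const, hT3card, smul_eq_mul] at hsumkey
    have hrhs : T3.sum (fun γ => Dset.card + F γ + 1)
        = 3 * (Dset.card + 1) + T3.sum F := by
      rw [Finset.sum_add_distrib, Finset.sum_add_distrib, Finset.sum_const, Finset.sum_const,
        hT3card]
      simp [mul_add]
      ring
    have hd3 := hdcount T3
    have hd4 : Cset.sum (fun c => (T3.filter (fun γ => failp c γ)).card) ≤ Cset.sum cost :=
      Finset.sum_le_sum (fun c hc => htc c hc _)
    -- conclude D = k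
    have hDk : Dset.card = k := by omega
    -- all children are bad
    have himg : Dset.image wit = K := by
      refine Finset.eq_of_subset_of_card_le (fun u hu => ?_) ?_
      · obtain ⟨c, hc, rfl⟩ := Finset.mem_image.1 hu
        exact (hwit1 c hc).1
      · rw [Finset.card_image_of_injOn (fun c1 hc1 c2 hc2 heq =>
          hinj c1 hc1 c2 hc2 (wit c1) (hwit1 c1 hc1).1 (hwit1 c1 hc1).2
            (by rw [heq]; exact (hwit1 c2 hc2).2))]
        omega
    have hallbad : ∀ u ∈ K, ∃ c, cS u c = ∅ := by
      intro u hu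
      rw [← himg] at hu
      obtain ⟨c, hc, rfl⟩ := Finset.mem_image.1 hu
      exact ⟨c, (hwit1 c hc).2⟩
    have hwt2 : ∀ u ∈ K, ∀ c', (cS u c').Nonempty → 2 ≤ (cS u c').card := by
      intro u hu c' hne
      obtain ⟨c0, hc0⟩ := hallbad u hu
      have hcne : c' ≠ c0 := by
        rintro rfl
        exact hne.ne_empty hc0
      have h := invc u hu {c0, c'}
      rw [Finset.sum_pair (fun h => hcne h.symm)] at h
      rw [show gp G L (subt G s r u) u c0 = cS u c0 from rfl,
        show gp G L (subt G s r u) u c' = cS u c' from rfl, hc0, wt_empty] at h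
      exact wt_zero_of hne (by omega)
    -- weak colors live inside Cset, which has only 2 elements
    have hCset2 : Cset.card = 2 := by omega
    have hT3C : T3 ⊆ Cset := by
      intro γ hγ
      have hw := hT3w γ hγ
      -- (Cset.erase γ) ⊆ gp γ
      have hsub2 : Cset.erase γ ⊆ gp G L s r γ := by
        intro c hc
        have hcC : c ∈ Cset := Finset.mem_of_mem_erase hc
        have hclv : lv c := (hlv_iff c).2 (Finset.mem_filter.1 hcC).2
        refine (hmem_gp γ c).2 ⟨?_, hclv, Or.inl ?_⟩
        · exact Finset.mem_erase.2 ⟨(Finset.mem_erase.1 hc).1,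
            Finset.mem_of_mem_filter c hcC⟩
        · intro u hu heq
          have h2 := hwt2 u hu c (hclv u hu)
          rw [heq] at h2
          simp at h2
      have hcard2 := Finset.card_le_card hsub2
      have hwc := one_le_wt_card hw
      by_contra hnot
      rw [Finset.erase_eq_of_notMem hnot] at hcard2
      omega
    have := Finset.card_le_card hT3C
    omega

end Inv


section Realize
variable {V : Type*} {G : SimpleGraph V}

lemma exists_ne_of_ne_singleton {A : Finset ℕ} {x : ℕ} (h : A.Nonempty) (h2 : A ≠ {x}) :
    ∃ d ∈ A, d ≠ x := by
  by_contra hcon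
  push_neg at hcon
  have : A ⊆ {x} := fun d hd => Finset.mem_singleton.2 (hcon d hd)
  rcases Finset.subset_singleton_iff.1 this with h3 | h3
  · exact h.ne_empty h3
  · exact h2 h3

lemma gp_subset_erase {L : V → Finset ℕ} {s : Finset V} {r : V} {γ : ℕ} :
    gp G L s r γ ⊆ (L r).erase γ := by
  rw [gp]
  split_ifs
  · exact Finset.filter_subset _ _
  · exact Finset.empty_subset _

def cfAt (G : SimpleGraph V) (φ : V → ℕ) (v : V) : Prop :=
  ∃ c, ∃! u, G.Adj v u ∧ φ u = c

lemma cfAt_congr {φ ψ : V → ℕ} {v : V} (h : ∀ w, G.Adj v w → φ w = ψ w)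
    (hc : cfAt G ψ v) : cfAt G φ v := by
  obtain ⟨c, u, ⟨hu1, hu2⟩, hu3⟩ := hc
  exact ⟨c, u, ⟨hu1, (h u hu1).trans hu2⟩,
    fun w ⟨hw1, hw2⟩ => hu3 w ⟨hw1, (h w hw1).symm.trans hw2⟩⟩

def semi (G : SimpleGraph V) (s : Finset V) (r : V) (γ : ℕ) (φ : V → ℕ) : Prop :=
  (∀ u ∈ kids G s r, φ u ≠ γ) ∨
  (∃ x, x ≠ γ ∧ ∃ u ∈ kids G s r, φ u = x ∧ ∀ u' ∈ kids G s r, φ u' = x → u' = u)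

/-- the conclusion of the realization lemma -/
def RS (G : SimpleGraph V) (L : V → Finset ℕ) (s : Finset V) (r : V) (γ c : ℕ)
    (φ : V → ℕ) : Prop :=
  φ r = c ∧ (∀ v ∈ s, φ v ∈ L v) ∧ (∀ v ∈ s, ∀ w ∈ s, G.Adj v w → φ v ≠ φ w) ∧
  (∀ v ∈ s, v ≠ r → cfAt G φ v) ∧ semi G s r γ φ

/-- the gluing construction -/
lemma glue (hforest : G.IsAcyclic) {L : V → Finset ℕ} {s : Finset V} {r : V}
    (hG : Good G s r) {c : ℕ} (hcLr : c ∈ L r) (tgt : V → ℕ)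
    (htgt : ∀ u ∈ kids G s r, tgt u ∈ gp G L (subt G s r u) u c)
    (IH : ∀ u ∈ kids G s r, ∀ c', c' ∈ gp G L (subt G s r u) u c →
      ∃ ψ, RS G L (subt G s r u) u c c' ψ) :
    ∃ φ : V → ℕ, φ r = c ∧ (∀ u ∈ kids G s r, φ u = tgt u) ∧
      (∀ v ∈ s, φ v ∈ L v) ∧ (∀ v ∈ s, ∀ w ∈ s, G.Adj v w → φ v ≠ φ w) ∧
      (∀ v ∈ s, v ≠ r → cfAt G φ v) := by
  classical
  have hIH : ∀ u : {x // x ∈ kids G s r}, ∃ ψ, RS G L (subt G s r u.1) u.1 c (tgt u.1) ψ :=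
    fun u => IH u.1 u.2 (tgt u.1) (htgt u.1 u.2)
  choose Φ hΦ using hIH
  set φ : V → ℕ := fun v =>
    if v = r then c
    else (kids G s r).attach.sum (fun u => if v ∈ subt G s r u.1 then Φ u v else 0) with hφ
  have hφr : φ r = c := by rw [hφ]; simp
  have hagree : ∀ (u : {x // x ∈ kids G s r}), ∀ v ∈ subt G s r u.1, φ v = Φ u v := by
    intro u v hv
    have hvr : v ≠ r := (mem_of_mem_subt hv).2
    rw [hφ]
    simp only [if_neg hvr]
    rw [Finset.sum_eq_single_of_mem u (Finset.mem_attach _ u)]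
    · rw [if_pos hv]
    · intro b _ hbne
      rw [if_neg]
      intro hvb
      apply hbne
      apply Subtype.ext
      by_contra hne
      exact Finset.disjoint_left.1 (subt_disjoint hforest b.2 u.2 hne) hvb hv
  have hkidval : ∀ (u : {x // x ∈ kids G s r}), φ u.1 = tgt u.1 := by
    intro u
    rw [hagree u u.1 (subt_self u.2)]
    exact (hΦ u).1
  -- membership in lists
  have hmem : ∀ v ∈ s, φ v ∈ L v := by
    intro v hv
    by_cases hvr : v = r
    · rw [hvr, hφr]; exact hcLr
    · obtain ⟨u, hu, hvu⟩ := cover hG hv hvr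
      rw [hagree ⟨u, hu⟩ v hvu]
      exact (hΦ ⟨u, hu⟩).2.1 v hvu
  -- values of kids avoid c
  have hkidne : ∀ (u : {x // x ∈ kids G s r}), φ u.1 ≠ c := by
    intro u
    rw [hkidval u]
    exact (Finset.mem_erase.1 (gp_subset_erase (htgt u.1 u.2))).1
  -- properness
  have hproper : ∀ v ∈ s, ∀ w ∈ s, G.Adj v w → φ v ≠ φ w := by
    intro v hv w hw hadj
    by_cases hvr : v = r
    · have hwK : w ∈ kids G s r := mem_kids.2 ⟨hw, hvr ▸ hadj⟩
      rw [hvr, hφr]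
      exact fun h => hkidne ⟨w, hwK⟩ h.symm
    · by_cases hwr : w = r
      · have hvK : v ∈ kids G s r := mem_kids.2 ⟨hv, hwr ▸ hadj.symm⟩
        rw [hwr, hφr]
        exact hkidne ⟨v, hvK⟩
      · obtain ⟨u, hu, hvu⟩ := cover hG hv hvr
        have hwu : w ∈ subt G s r u := by
          by_cases hvu' : v = u
          · subst hvu'
            have : w ∈ kids G (subt G s r v) v := by
              rw [kids_subt_eq hG hu]
              exact Finset.mem_erase.2 ⟨hwr, mem_kids.2 ⟨hw, hadj⟩⟩
            exact (mem_kids.1 this).1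
          · exact (good_subt hforest hG hu).closed v hvu hvu' w hadj
        rw [hagree ⟨u, hu⟩ v hvu, hagree ⟨u, hu⟩ w hwu]
        exact (hΦ ⟨u, hu⟩).2.2.1 v hvu w hwu hadj
  refine ⟨φ, hφr, fun u hu => hkidval ⟨u, hu⟩, hmem, hproper, ?_⟩
  -- conflict-freeness away from the root
  intro v hv hvr
  obtain ⟨u, hu, hvu⟩ := cover hG hv hvr
  by_cases hvu' : v = u
  · -- the child itself: use semi + parent colored c
    subst hvu'
    have hsemi := (hΦ ⟨v, hu⟩).2.2.2.2
    have hvs : v ∈ s := (mem_kids.1 hu).1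
    have hadjrv : G.Adj r v := (mem_kids.1 hu).2
    have hnbr : ∀ w, G.Adj v w → w ≠ r → w ∈ kids G (subt G s r v) v := by
      intro w hadj hwr
      rw [kids_subt_eq hG hu]
      exact Finset.mem_erase.2 ⟨hwr, mem_kids.2 ⟨hG.closed v hvs hvr w hadj, hadj⟩⟩
    have hwval : ∀ w, w ∈ kids G (subt G s r v) v → φ w = Φ ⟨v, hu⟩ w := by
      intro w hw
      exact hagree ⟨v, hu⟩ w (mem_kids.1 hw).1
    rcases hsemi with hA | ⟨x, hxc, u', hu'k, hu'v, hu'uniq⟩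
    · -- parent uniquely colored c
      refine ⟨c, r, ⟨hadjrv.symm, hφr⟩, ?_⟩
      rintro w ⟨hadj, hwc⟩
      by_contra hwr
      have hwk := hnbr w hadj hwr
      have := (hΦ ⟨v, hu⟩).2.2.2.2
      have hval := hwval w hwk
      exact hA w hwk (by rw [← hval, hwc])
    · -- unique child colored x
      refine ⟨x, u', ⟨(mem_kids.1 hu'k).2, by rw [hwval u' hu'k]; exact hu'v⟩, ?_⟩
      rintro w ⟨hadj, hwx⟩
      have hwr : w ≠ r := by
        rintro rfl
        rw [hφr] at hwx
        exact hxc hwx.symm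
      have hwk := hnbr w hadj hwr
      exact hu'uniq w hwk (by rw [← hwval w hwk]; exact hwx)
  · -- deeper vertex: transfer from the child's coloring
    have hcf := (hΦ ⟨u, hu⟩).2.2.2.1 v hvu hvu'
    refine cfAt_congr ?_ hcf
    intro w hadj
    exact hagree ⟨u, hu⟩ w ((good_subt hforest hG hu).closed v hvu hvu' w hadj)

/-- realization of profile members -/
lemma realize (hforest : G.IsAcyclic) (L : V → Finset ℕ) :
    ∀ (n : ℕ) (s : Finset V) (r : V), s.card = n → Good G s r →
      ∀ γ c, c ∈ gp G L s r γ → ∃ φ : V → ℕ, RS G L s r γ c φ := by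
  intro n
  induction n using Nat.strong_induction_on with
  | _ n IH =>
  intro s r hn hG γ c hc
  classical
  obtain ⟨hcmem, hlive, hdisj⟩ := (mem_gp_iff hG.mem).1 hc
  set K := kids G s r with hK
  set cS : V → ℕ → Finset ℕ := fun u c' => gp G L (subt G s r u) u c' with hcS
  -- choose targets
  obtain ⟨tgt, htgt, hsem⟩ : ∃ tgt : V → ℕ, (∀ u ∈ K, tgt u ∈ cS u c) ∧
      ((∀ u ∈ K, tgt u ≠ γ) ∨ (∃ x, x ≠ γ ∧ ∃ u0 ∈ K, tgt u0 = x ∧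
        ∀ u' ∈ K, u' ≠ u0 → tgt u' ≠ x)) := by
    rcases hdisj with hA | ⟨x, hxγ, u0, hu0, hxmem, huniq⟩
    · have hch : ∀ u : {y // y ∈ K}, ∃ d, d ∈ cS u.1 c ∧ d ≠ γ := by
        intro u
        obtain ⟨d, hd1, hd2⟩ := exists_ne_of_ne_singleton (hlive u.1 u.2) (hA u.1 u.2)
        exact ⟨d, hd1, hd2⟩
      choose f hf1 hf2 using hch
      refine ⟨fun u => if hu : u ∈ K then f ⟨u, hu⟩ else 0, ?_, Or.inl ?_⟩
      · intro u hu; dsimp only; rw [dif_pos hu]; exact hf1 ⟨u, hu⟩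
      · intro u hu; dsimp only; rw [dif_pos hu]; exact hf2 ⟨u, hu⟩
    · have hch : ∀ u : {y // y ∈ K}, ∃ d, d ∈ cS u.1 c ∧ (u.1 ≠ u0 → d ≠ x) := by
        intro u
        by_cases he : u.1 = u0
        · exact ⟨x, by rw [he]; exact hxmem, fun h => absurd he h⟩
        · obtain ⟨d, hd1, hd2⟩ :=
            exists_ne_of_ne_singleton (hlive u.1 u.2) (huniq u.1 u.2 he)
          exact ⟨d, hd1, fun _ => hd2⟩
      choose f hf1 hf2 using hch
      refine ⟨fun u => if u = u0 then x else (if hu : u ∈ K then f ⟨u, hu⟩ else 0), ?_,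
        Or.inr ⟨x, hxγ, u0, hu0, by dsimp only; rw [if_pos rfl], ?_⟩⟩
      · intro u hu
        by_cases he : u = u0
        · subst he; dsimp only; rw [if_pos rfl]; exact hxmem
        · dsimp only; rw [if_neg he, dif_pos hu]; exact hf1 ⟨u, hu⟩
      · intro u' hu' hne
        dsimp only
        rw [if_neg hne, dif_pos hu']
        exact hf2 ⟨u', hu'⟩ hne
  have hIHarg : ∀ u ∈ kids G s r, ∀ c', c' ∈ gp G L (subt G s r u) u c →
      ∃ ψ, RS G L (subt G s r u) u c c' ψ := by
    intro u hu c' hc'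
    exact IH (subt G s r u).card (hn ▸ subt_ssub G hG.mem u) (subt G s r u) u rfl
      (good_subt hforest hG hu) c c' hc'
  obtain ⟨φ, hφr, hkid, hmem, hproper, hcf⟩ :=
    glue hforest hG (Finset.mem_of_mem_erase hcmem) tgt htgt hIHarg
  refine ⟨φ, hφr, hmem, hproper, hcf, ?_⟩
  rcases hsem with hA | ⟨x, hxγ, u0, hu0, hval, huniq⟩
  · exact Or.inl (fun u hu => by rw [hkid u hu]; exact hA u hu)
  · refine Or.inr ⟨x, hxγ, u0, hu0, by rw [hkid u0 hu0]; exact hval, ?_⟩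
    intro u' hu' hval'
    by_contra hne
    exact huniq u' hu' hne (by rw [← hkid u' hu']; exact hval')

end Realize

section Root
variable {V : Type*} {G : SimpleGraph V}

lemma inv_child (hforest : G.IsAcyclic) {L : V → Finset ℕ} {s : Finset V} {r : V}
    (hG : Good G s r) (hfmt : ∀ v ∈ s, v ≠ r → (kids G s v).card + 1 = (L v).card)
    {u : V} (hu : u ∈ kids G s r) :
    ∀ t : Finset ℕ, (t.sum fun γ => wt (gp G L (subt G s r u) u γ)) ≤ 2 := by
  intro t
  have hGu := good_subt hforest hG hu
  have hus : u ∈ s := (mem_kids.1 hu).1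
  have hur : u ≠ r := (mem_kids.1 hu).2.ne'
  refine inv hforest L (subt G s r u).card _ u rfl hGu ?_ ?_ t
  · intro v hv hvu
    rw [kids_subt_eq_deep hforest hG hu hv hvu]
    exact hfmt v (mem_of_mem_subt hv).1 (mem_of_mem_subt hv).2
  · rw [kids_subt_eq hG hu]
    have hrk : r ∈ kids G s u := mem_kids.2 ⟨hG.mem, (mem_kids.1 hu).2.symm⟩
    rw [Finset.card_erase_of_mem hrk]
    have h1 := hfmt u hus hur
    have hpos : 1 ≤ (kids G s u).card := Finset.card_pos.2 ⟨r, hrk⟩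
    omega

lemma root_coloring (hforest : G.IsAcyclic) {L : V → Finset ℕ} {s : Finset V} {r : V}
    (hG : Good G s r)
    (hfmt : ∀ v ∈ s, v ≠ r → (kids G s v).card + 1 = (L v).card)
    (hroot : (kids G s r).card + 1 = (L r).card)
    (hkne : (kids G s r).Nonempty)
    (hclr : ∀ w, G.Adj r w → w ∈ s) :
    ∃ φ : V → ℕ, (∀ v ∈ s, φ v ∈ L v) ∧ (∀ v ∈ s, ∀ w ∈ s, G.Adj v w → φ v ≠ φ w) ∧
      (∀ v ∈ s, cfAt G φ v) := by
  classical
  set K := kids G s r with hK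
  set k := K.card with hk
  set cS : V → ℕ → Finset ℕ := fun u c' => gp G L (subt G s r u) u c' with hcS
  set cost : ℕ → ℕ := fun c => K.sum (fun u => wt (cS u c)) with hcost
  have hbudget : ((L r).sum cost) ≤ 2 * k := by
    calc (L r).sum cost = K.sum (fun u => (L r).sum (fun c => wt (cS u c))) := Finset.sum_comm
    _ ≤ K.sum (fun _ => 2) := Finset.sum_le_sum (fun u hu => inv_child hforest hG hfmt hu (L r))
    _ = 2 * k := by rw [Finset.sum_const, smul_eq_mul, mul_comm]
  -- find a good root color
  have hgood : ∃ c ∈ L r, (∀ u ∈ K, (cS u c).Nonempty) ∧ (∃ x, ∃ u0 ∈ K, x ∈ cS u0 c ∧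
      ∀ u' ∈ K, u' ≠ u0 → cS u' c ≠ {x}) := by
    by_contra hcon
    push_neg at hcon
    have hcost2 : ∀ c ∈ L r, 2 ≤ cost c := by
      intro c hc
      by_cases hd : ∀ u ∈ K, (cS u c).Nonempty
      · obtain ⟨u0, hu0⟩ := hkne
        obtain ⟨x0, hx0⟩ := hd u0 hu0
        obtain ⟨u1, hu1, hne1, he1⟩ := hcon c hc hd x0 u0 hu0 hx0
        obtain ⟨u2, hu2, hne2, he2⟩ := hcon c hc hd x0 u1 hu1
          (by rw [he1]; exact Finset.mem_singleton_self x0)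
        have hpair : ({u2, u1} : Finset V).sum (fun u => wt (cS u c)) = 2 := by
          rw [Finset.sum_pair hne2, he1, he2,
            wt_card_one (Finset.card_singleton x0)]
        calc (2:ℕ) = ({u2, u1} : Finset V).sum (fun u => wt (cS u c)) := hpair.symm
        _ ≤ K.sum (fun u => wt (cS u c)) := Finset.sum_le_sum_of_subset (by
            intro y hy
            rcases Finset.mem_insert.1 hy with rfl | hy'
            · exact hu2
            · rw [Finset.mem_singleton.1 hy']; exact hu1)
        _ = cost c := rfl
      · push_neg at hd
        obtain ⟨u, hu, hne⟩ := hd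
        calc (2:ℕ) = wt (cS u c) := by
              rw [hne, wt_empty]
        _ ≤ cost c := by
            exact Finset.single_le_sum (f := fun y => wt (cS y c)) (fun i _ => Nat.zero_le _) hu
    have h1 : 2 * (L r).card ≤ (L r).sum cost := by
      calc 2 * (L r).card = (L r).sum (fun _ => 2) := by
            rw [Finset.sum_const, smul_eq_mul, mul_comm]
      _ ≤ (L r).sum cost := Finset.sum_le_sum hcost2
    have hcard : (L r).card = k + 1 := hroot.symm
    omega
  obtain ⟨c, hcLr, hlive, x, u0, hu0, hxmem, huniq⟩ := hgood
  -- choose targets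
  have hch : ∀ u : {y // y ∈ K}, ∃ d, d ∈ cS u.1 c ∧ (u.1 ≠ u0 → d ≠ x) := by
    intro u
    by_cases he : u.1 = u0
    · exact ⟨x, by rw [he]; exact hxmem, fun h => absurd he h⟩
    · obtain ⟨d, hd1, hd2⟩ := exists_ne_of_ne_singleton (hlive u.1 u.2) (huniq u.1 u.2 he)
      exact ⟨d, hd1, fun _ => hd2⟩
  choose f hf1 hf2 using hch
  set tgt : V → ℕ := fun u => if u = u0 then x else (if hu : u ∈ K then f ⟨u, hu⟩ else 0)
    with htgtdef
  have htgt : ∀ u ∈ K, tgt u ∈ cS u c := by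
    intro u hu
    rw [htgtdef]
    by_cases he : u = u0
    · subst he; dsimp only; rw [if_pos rfl]; exact hxmem
    · dsimp only; rw [if_neg he, dif_pos hu]; exact hf1 ⟨u, hu⟩
  have htgtx : ∀ u' ∈ K, u' ≠ u0 → tgt u' ≠ x := by
    intro u' hu' hne
    rw [htgtdef]
    dsimp only
    rw [if_neg hne, dif_pos hu']
    exact hf2 ⟨u', hu'⟩ hne
  have htgtu0 : tgt u0 = x := by rw [htgtdef]; dsimp only; rw [if_pos rfl]
  have hIHarg : ∀ u ∈ kids G s r, ∀ c', c' ∈ gp G L (subt G s r u) u c →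
      ∃ ψ, RS G L (subt G s r u) u c c' ψ := by
    intro u hu c' hc'
    exact realize hforest L (subt G s r u).card (subt G s r u) u rfl
      (good_subt hforest hG hu) c c' hc'
  obtain ⟨φ, hφr, hkid, hmem, hproper, hcf⟩ := glue hforest hG hcLr tgt htgt hIHarg
  refine ⟨φ, hmem, hproper, ?_⟩
  intro v hv
  by_cases hvr : v = r
  · subst hvr
    refine ⟨x, u0, ⟨(mem_kids.1 hu0).2, by rw [hkid u0 hu0]; exact htgtu0⟩, ?_⟩
    rintro w ⟨hadj, hwx⟩
    have hwK : w ∈ K := mem_kids.2 ⟨hclr w hadj, hadj⟩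
    by_contra hne
    exact htgtx w hwK hne (by rw [← hkid w hwK]; exact hwx)
  · exact hcf v hv hvr

end Root
/-- A proper conflict-free coloring of `G`. -/
def IsPCF {V β : Type*} (G : SimpleGraph V) (φ : V → β) : Prop :=
  (∀ ⦃a b : V⦄, G.Adj a b → φ a ≠ φ b) ∧
  ∀ v : V, (∃ u, G.Adj v u) → ∃ c : β, ∃! u : V, G.Adj v u ∧ φ u = c

/-- Every forest with no isolated vertices (in particular every tree) is proper
conflict-free (degree + 1)-choosable. -/
theorem stmt5 {V : Type*} [Fintype V] (G : SimpleGraph V) [DecidableRel G.Adj]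
    (hforest : G.IsAcyclic) (hnoiso : ∀ v : V, ∃ u, G.Adj v u)
    (L : V → Finset ℕ) (hL : ∀ v, (L v).card = G.degree v + 1) :
    ∃ φ : V → ℕ, (∀ v, φ v ∈ L v) ∧ IsPCF G φ := by
  classical
  have hkids_eq : ∀ (C : G.ConnectedComponent) (v : V),
      G.connectedComponentMk v = C →
      kids G (Finset.univ.filter (fun w => G.connectedComponentMk w = C)) v
        = G.neighborFinset v := by
    intro C v hv
    ext x
    simp only [mem_kids, Finset.mem_filter, Finset.mem_univ, true_and, mem_neighborFinset]
    constructor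
    · rintro ⟨-, h⟩; exact h
    · intro h
      exact ⟨by rw [← hv]; exact (SimpleGraph.ConnectedComponent.connectedComponentMk_eq_of_adj h.symm), h⟩
  have hcomp : ∀ C : G.ConnectedComponent, ∃ φ : V → ℕ,
      (∀ v ∈ Finset.univ.filter (fun w => G.connectedComponentMk w = C), φ v ∈ L v) ∧
      (∀ v ∈ Finset.univ.filter (fun w => G.connectedComponentMk w = C),
        ∀ w ∈ Finset.univ.filter (fun w => G.connectedComponentMk w = C),
          G.Adj v w → φ v ≠ φ w) ∧
      (∀ v ∈ Finset.univ.filter (fun w => G.connectedComponentMk w = C), cfAt G φ v) := by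
    intro C
    set s := Finset.univ.filter (fun w => G.connectedComponentMk w = C) with hs
    have hmemS : ∀ v, v ∈ s ↔ G.connectedComponentMk v = C := by
      intro v; rw [hs]; simp
    set r := C.out with hr
    have hrC : G.connectedComponentMk r = C := C.out_eq
    have hrs : r ∈ s := (hmemS r).2 hrC
    have hclosed : ∀ v ∈ s, ∀ w, G.Adj v w → w ∈ s := by
      intro v hv w hadj
      refine (hmemS w).2 ?_
      rw [← (hmemS v).1 hv]
      exact (SimpleGraph.ConnectedComponent.connectedComponentMk_eq_of_adj hadj.symm)
    have hG : Good G s r := by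
      refine ⟨hrs, fun v hv _ w hadj => hclosed v hv w hadj, ?_⟩
      intro v hv
      have hreach : G.Reachable r v := by
        apply SimpleGraph.ConnectedComponent.exact
        rw [hrC, (hmemS v).1 hv]
      obtain ⟨w⟩ := hreach
      refine ⟨w, fun x hx => ?_⟩
      refine (hmemS x).2 ?_
      have : G.Reachable r x := ⟨w.takeUntil x hx⟩
      rw [← hrC]
      exact (SimpleGraph.ConnectedComponent.sound this).symm
    have hfmt : ∀ v ∈ s, v ≠ r → (kids G s v).card + 1 = (L v).card := by
      intro v hv _
      rw [hkids_eq C v ((hmemS v).1 hv), hL, SimpleGraph.card_neighborFinset_eq_degree]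
    have hroot : (kids G s r).card + 1 = (L r).card := by
      rw [hkids_eq C r hrC, hL, SimpleGraph.card_neighborFinset_eq_degree]
    have hkne : (kids G s r).Nonempty := by
      obtain ⟨u, hu⟩ := hnoiso r
      exact ⟨u, by rw [hkids_eq C r hrC]; exact (G.mem_neighborFinset r u).2 hu⟩
    have hclr : ∀ w, G.Adj r w → w ∈ s := fun w h => hclosed r hrs w h
    exact root_coloring hforest hG hfmt hroot hkne hclr
  choose Ψ hΨ1 hΨ2 hΨ3 using hcomp
  refine ⟨fun v => Ψ (G.connectedComponentMk v) v, ?_, ?_, ?_⟩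
  · intro v
    exact hΨ1 (G.connectedComponentMk v) v
      (Finset.mem_filter.2 ⟨Finset.mem_univ v, rfl⟩)
  · intro a b hadj
    have he : G.connectedComponentMk b = G.connectedComponentMk a :=
      (SimpleGraph.ConnectedComponent.connectedComponentMk_eq_of_adj hadj).symm
    show Ψ (G.connectedComponentMk a) a ≠ Ψ (G.connectedComponentMk b) b
    rw [he]
    exact hΨ2 (G.connectedComponentMk a) a (Finset.mem_filter.2 ⟨Finset.mem_univ a, rfl⟩)
      b (Finset.mem_filter.2 ⟨Finset.mem_univ b, he⟩) hadj
  · intro v _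
    have hcf := hΨ3 (G.connectedComponentMk v) v
      (Finset.mem_filter.2 ⟨Finset.mem_univ v, rfl⟩)
    refine cfAt_congr ?_ hcf
    intro w hadj
    have he : G.connectedComponentMk w = G.connectedComponentMk v :=
      (SimpleGraph.ConnectedComponent.connectedComponentMk_eq_of_adj hadj.symm)
    show Ψ (G.connectedComponentMk w) w = Ψ (G.connectedComponentMk v) w
    rw [he]
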